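/- arXiv:1903.12169 — 3 statements merged into one kernel-verified Lean document; each statement's English description precedes it below -/
import Mathlib

section
/- Let α ≥ 1 and p ≥ 1. For real numbers s, t, define g(u) = sgn(u)·|u|^{1/α}. Then |g(s) - g(t)|^{αp} ≤ 2^{αp} |s - t|^p. Moreover, if s and t have the same sign (s·t ≥ 0), then |g(s) - g(t)|^{αp} ≤ |s - t|^p. -/
lemma real_rpow_add_le (x y r : ℝ) (hx : 0 ≤ x) (hy : 0 ≤ y) (hr0 : 0 ≤ r) (hr1 : r ≤ 1) :
    (x + y) ^ r ≤ x ^ r + y ^ r := by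
  have h := NNReal.coe_le_coe.2 (NNReal.rpow_add_le_add_rpow x.toNNReal y.toNNReal hr0 hr1)
  rw [NNReal.coe_add, NNReal.coe_rpow, NNReal.coe_rpow, NNReal.coe_rpow, NNReal.coe_add,
    Real.coe_toNNReal _ hx, Real.coe_toNNReal _ hy] at h
  exact h

/-- `|a^r - b^r| ≤ |a - b|^r` for nonnegative `a, b` and `0 ≤ r ≤ 1`. -/
lemma abs_rpow_sub_rpow_le (a b r : ℝ) (ha : 0 ≤ a) (hb : 0 ≤ b) (hr0 : 0 ≤ r) (hr1 : r ≤ 1) :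
    |a ^ r - b ^ r| ≤ |a - b| ^ r := by
  wlog hba : b ≤ a generalizing a b
  · rw [abs_sub_comm, abs_sub_comm a b]; exact this b a hb ha (le_of_not_ge hba)
  have h1 : b ^ r ≤ a ^ r := Real.rpow_le_rpow hb hba hr0
  rw [abs_of_nonneg (sub_nonneg.2 h1), abs_of_nonneg (sub_nonneg.2 hba)]
  have := real_rpow_add_le (a - b) b r (sub_nonneg.2 hba) hb hr0 hr1
  rw [sub_add_cancel] at this
  linarith

/-- for `g(u) = sgn(u)·|u|^{1/α}` with `α, p ≥ 1`, one has
`|g(s) - g(t)|^{αp} ≤ 2^{αp} |s - t|^p`, and if `s·t ≥ 0` then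
`|g(s) - g(t)|^{αp} ≤ |s - t|^p`. -/
theorem sign_rpow_oscillation_bound (α p : ℝ) (hα : 1 ≤ α) (hp : 1 ≤ p)
    (g : ℝ → ℝ) (hg : ∀ u, g u = Real.sign u * |u| ^ (1 / α)) (s t : ℝ) :
    |g s - g t| ^ (α * p) ≤ 2 ^ (α * p) * |s - t| ^ p ∧
    (0 ≤ s * t → |g s - g t| ^ (α * p) ≤ |s - t| ^ p) := by
  have hα0 : (0 : ℝ) < α := lt_of_lt_of_le one_pos hα
  set r : ℝ := 1 / α with hr
  have hr0 : 0 < r := by positivity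
  have hr1 : r ≤ 1 := by rw [hr]; exact (div_le_one hα0).2 hα
  have hq0 : 0 < α * p := by positivity
  -- g on nonnegative reals
  have hgpos : ∀ u : ℝ, 0 ≤ u → g u = u ^ r := by
    intro u hu
    rcases hu.eq_or_lt with h | h
    · simp [hg, ← h, Real.zero_rpow hr0.ne']
    · rw [hg, Real.sign_of_pos h, abs_of_pos h, one_mul]
  have hgneg : ∀ u : ℝ, g (-u) = - g u := by
    intro u
    rcases lt_trichotomy u 0 with h | h | h
    · rw [hg, hg, Real.sign_of_pos (by linarith), Real.sign_of_neg h, abs_neg]; ring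
    · simp [h, hg]
    · rw [hg, hg, Real.sign_of_neg (by linarith), Real.sign_of_pos h, abs_neg]; ring
  -- same-sign core estimate
  have key : ∀ s t : ℝ, 0 ≤ s * t → |g s - g t| ≤ |s - t| ^ r := by
    have base : ∀ s t : ℝ, 0 ≤ s → 0 ≤ t → |g s - g t| ≤ |s - t| ^ r := by
      intro s t hs ht
      rw [hgpos s hs, hgpos t ht]
      exact abs_rpow_sub_rpow_le s t r hs ht hr0.le hr1
    intro s t hst
    rcases mul_nonneg_iff.1 hst with ⟨hs, ht⟩ | ⟨hs, ht⟩
    · exact base s t hs ht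
    · have := base (-s) (-t) (by linarith) (by linarith)
      have h1 : |g (-s) - g (-t)| = |g s - g t| := by
        rw [hgneg, hgneg, show (-g s - -g t : ℝ) = -(g s - g t) by ring, abs_neg]
      have h2 : |-s - -t| = |s - t| := by rw [show (-s - -t : ℝ) = -(s - t) by ring, abs_neg]
      rwa [h1, h2] at this
  -- general estimate with factor 2
  have key2 : ∀ s t : ℝ, |g s - g t| ≤ 2 * |s - t| ^ r := by
    have opp : ∀ s t : ℝ, t < 0 → 0 < s → |g s - g t| ≤ 2 * |s - t| ^ r := by
      intro s t ht hs
      have hst : 0 < s - t := by linarith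
      have hgt : g t = -((-t) ^ r) := by
        rw [show (t : ℝ) = -(-t) by ring, hgneg, hgpos (-t) (by linarith)]; ring_nf
      rw [hgpos s hs.le, hgt, sub_neg_eq_add,
        abs_of_nonneg (add_nonneg (Real.rpow_nonneg hs.le r) (Real.rpow_nonneg (by linarith) r))]
      have h1 : s ^ r ≤ (s - t) ^ r := Real.rpow_le_rpow hs.le (by linarith) hr0.le
      have h2 : (-t) ^ r ≤ (s - t) ^ r := Real.rpow_le_rpow (by linarith) (by linarith) hr0.le
      rw [abs_of_pos hst]
      linarith
    intro s t
    rcases le_or_gt 0 (s * t) with hst | hst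
    · have := key s t hst
      have h0 : (0:ℝ) ≤ |s - t| ^ r := Real.rpow_nonneg (abs_nonneg _) r
      linarith
    · rcases lt_or_ge 0 s with hs | hs
      · exact opp s t (by nlinarith) hs
      · have ht : 0 < t := by nlinarith
        have := opp t s (by nlinarith) ht
        rwa [abs_sub_comm, abs_sub_comm t s] at this
  -- raising to the power α*p
  have hrq : r * (α * p) = p := by rw [hr]; field_simp
  constructor
  · have h := Real.rpow_le_rpow (abs_nonneg _) (key2 s t) hq0.le
    calc |g s - g t| ^ (α * p) ≤ (2 * |s - t| ^ r) ^ (α * p) := h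
      _ = 2 ^ (α * p) * (|s - t| ^ r) ^ (α * p) :=
          Real.mul_rpow (by norm_num) (Real.rpow_nonneg (abs_nonneg _) r)
      _ = 2 ^ (α * p) * |s - t| ^ p := by
          rw [← Real.rpow_mul (abs_nonneg _), hrq]
  · intro hst
    have h := Real.rpow_le_rpow (abs_nonneg _) (key s t hst) hq0.le
    rwa [← Real.rpow_mul (abs_nonneg _), hrq] at h
end

section
/- Let B be a finite set, f : B → ℝ, and suppose the values of f along every 'chain of neighbors' change by at most 2, in the following abstract form: there is a point x₀ ∈ B and a nonincreasing family of sets E_l = {x ∈ B : |f(x) - f(x₀)| > l} for l ∈ ℕ. If for integers l ≥ N one has |E_{2l}| ≤ 2^{N/2+1}·2^{-l}·|B| for some fixed even integer N, and |f_B - f(x₀)| ≤ N, then there exist constants c₁, c₂ > 0 depending only on N such that |{x ∈ B : |f(x) - f_B| > λ}|/|B| ≤ c₁·exp(-c₂ λ) for all λ > 0. -/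
open Classical

/-- if on a finite set `B` (with counting measure) one has
`|f_B - f(x₀)| ≤ N` and `|E_{2l}| ≤ 2^{N/2+1}·2^{-l}·|B|` for all integers `l ≥ N`
(where `E_l = {x ∈ B : |f(x) - f(x₀)| > l}` and `N` is a fixed even positive integer),
then a John–Nirenberg type exponential bound holds with constants depending only on `N`. -/
theorem finite_set_john_nirenberg {X : Type*} (N : ℕ) (hN : 0 < N) (hNeven : Even N) :
    ∃ c₁ c₂ : ℝ, 0 < c₁ ∧ 0 < c₂ ∧
      ∀ (B : Finset X) (f : X → ℝ) (x₀ : X), x₀ ∈ B →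
        |((B.card : ℝ))⁻¹ * ∑ x ∈ B, f x - f x₀| ≤ (N : ℝ) →
        (∀ l : ℕ, N ≤ l →
          ((B.filter (fun x => (2 * (l : ℝ)) < |f x - f x₀|)).card : ℝ) ≤
            2 ^ (N / 2 + 1) * 2 ^ (-(l : ℝ)) * (B.card : ℝ)) →
        ∀ lam : ℝ, 0 < lam →
          ((B.filter
              (fun x => lam < |f x - ((B.card : ℝ))⁻¹ * ∑ y ∈ B, f y|)).card : ℝ) /
              (B.card : ℝ) ≤ c₁ * Real.exp (-c₂ * lam) := by
  have hlog2 : (0:ℝ) < Real.log 2 := Real.log_pos one_lt_two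
  set c₂ : ℝ := Real.log 2 / 2 with hc₂
  have hc₂pos : 0 < c₂ := by positivity
  refine ⟨2 ^ (N + 2) * Real.exp (c₂ * (3 * N)), c₂, by positivity, hc₂pos, ?_⟩
  intro B f x₀ hx₀ hmean hE lam hlam
  set fB : ℝ := ((B.card : ℝ))⁻¹ * ∑ y ∈ B, f y with hfB
  have hcard : (0:ℝ) < (B.card : ℝ) := by
    exact_mod_cast Finset.card_pos.mpr ⟨x₀, hx₀⟩
  have hexp1 : (1:ℝ) ≤ Real.exp (c₂ * (3 * N)) := by
    rw [← Real.exp_zero]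
    apply Real.exp_le_exp.mpr
    positivity
  rcases le_or_gt lam (3 * N) with hcase | hcase
  · have h1 : ((B.filter (fun x => lam < |f x - fB|)).card : ℝ) / (B.card : ℝ) ≤ 1 := by
      rw [div_le_one hcard]
      exact_mod_cast Finset.card_filter_le _ _
    have h2 : Real.exp (c₂ * (3 * N)) * Real.exp (-c₂ * lam)
        = Real.exp (c₂ * (3 * N) + -c₂ * lam) := (Real.exp_add _ _).symm
    have h3 : (1:ℝ) ≤ Real.exp (c₂ * (3 * N) + -c₂ * lam) := by
      rw [← Real.exp_zero]
      apply Real.exp_le_exp.mpr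
      nlinarith
    have h4 : (1:ℝ) ≤ (2:ℝ) ^ (N + 2) := one_le_pow₀ one_le_two
    calc ((B.filter (fun x => lam < |f x - fB|)).card : ℝ) / (B.card : ℝ) ≤ 1 := h1
      _ ≤ (2:ℝ) ^ (N + 2) * Real.exp (c₂ * (3 * N) + -c₂ * lam) := by nlinarith
      _ = 2 ^ (N + 2) * Real.exp (c₂ * (3 * N)) * Real.exp (-c₂ * lam) := by
          rw [mul_assoc, h2]
  · -- main case: lam > 3N
    set l : ℕ := ⌊(lam - N) / 2⌋₊ with hl
    have hNlam : (N:ℝ) ≤ (lam - N) / 2 := by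
      have : (0:ℝ) ≤ (N:ℝ) := by positivity
      linarith
    have hl0 : (0:ℝ) ≤ (lam - N) / 2 := by linarith [show (0:ℝ) ≤ (N:ℝ) by positivity]
    have hlN : N ≤ l := Nat.le_floor hNlam
    have h2l : 2 * (l:ℝ) ≤ lam - N := by
      have := Nat.floor_le hl0
      linarith
    have hlup : (lam - N) / 2 < (l:ℝ) + 1 := Nat.lt_floor_add_one _
    have hsub : B.filter (fun x => lam < |f x - fB|) ⊆
        B.filter (fun x => (2 * (l : ℝ)) < |f x - f x₀|) := by
      intro x hx
      rw [Finset.mem_filter] at hx ⊢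
      refine ⟨hx.1, ?_⟩
      have htri : |f x - fB| ≤ |f x - f x₀| + |f x₀ - fB| := abs_sub_le _ _ _
      have hcomm : |f x₀ - fB| = |fB - f x₀| := abs_sub_comm _ _
      have hm : |fB - f x₀| ≤ (N:ℝ) := hmean
      have := hx.2
      linarith
    have hbound := hE l hlN
    have hcardle : ((B.filter (fun x => lam < |f x - fB|)).card : ℝ) ≤
        2 ^ (N / 2 + 1) * 2 ^ (-(l : ℝ)) * (B.card : ℝ) :=
      le_trans (by exact_mod_cast Finset.card_le_card hsub) hbound
    have hratio : ((B.filter (fun x => lam < |f x - fB|)).card : ℝ) / (B.card : ℝ) ≤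
        2 ^ (N / 2 + 1) * 2 ^ (-(l : ℝ)) := by
      rw [div_le_iff₀ hcard]
      exact hcardle
    refine hratio.trans ?_
    have hhalf : ((N / 2 : ℕ) : ℝ) = (N:ℝ) / 2 := by
      obtain ⟨k, hk⟩ := hNeven
      subst hk
      have : (k + k) / 2 = k := by omega
      rw [this]
      push_cast
      ring
    have e1 : (2:ℝ) ^ (N / 2 + 1) = Real.exp ((((N/2 : ℕ):ℝ) + 1) * Real.log 2) := by
      rw [show ((((N/2 : ℕ):ℝ)) + 1) = (((N/2 + 1 : ℕ)):ℝ) by push_cast; ring]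
      rw [Real.exp_nat_mul, Real.exp_log two_pos]
    have e2 : (2:ℝ) ^ (-(l:ℝ)) = Real.exp (Real.log 2 * (-(l:ℝ))) :=
      Real.rpow_def_of_pos two_pos _
    have e3 : (2:ℝ) ^ (N + 2) = Real.exp (((N + 2 : ℕ):ℝ) * Real.log 2) := by
      rw [Real.exp_nat_mul, Real.exp_log two_pos]
    rw [e1, e2, e3, ← Real.exp_add, mul_assoc, ← Real.exp_add, ← Real.exp_add]
    apply Real.exp_le_exp.mpr
    rw [hhalf, hc₂]
    have hkey : lam / 2 ≤ (N:ℝ)/2 + 1 + (l:ℝ) := by linarith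
    have hN0 : (0:ℝ) ≤ (N:ℝ) := Nat.cast_nonneg N
    push_cast
    nlinarith [mul_le_mul_of_nonneg_right hkey hlog2.le,
      mul_nonneg hN0 hlog2.le]
end

section
/- Define p₀ = sup{p ∈ [1, ∞) : BMO^p(𝕏) = BMO^1(𝕏)} and assume p₀ < ∞ and BMO^{p₀}(𝕏) = BMO^1(𝕏). Then, granting that strict inclusion BMO^{p₁} ⊊ BMO^{p₂} for some pair implies BMO^{αp₁} ⊊ BMO^{αp₂} for all α > 1 (the dilation lemma), one concludes: BMO^p(𝕏) = BMO^1(𝕏) for all p ≤ p₀, and BMO^{p₁}(𝕏) ⊊ BMO^{p₂}(𝕏) for all 1 ≤ p₁ < p₂ with p₂ > p₀. -/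
open MeasureTheory Metric
open scoped ENNReal

/-- The average of `f` over `B` with respect to `μ`. -/
noncomputable def ballAvg {X : Type*} [MeasurableSpace X] (μ : Measure X)
    (B : Set X) (f : X → ℝ) : ℝ :=
  ((μ B).toReal)⁻¹ * ∫ x in B, f x ∂μ

/-- The normalized `p`-th mean oscillation of `f` on `B`:
`(1/μ(B)) ∫_B |f - f_B|^p dμ`, valued in `ℝ≥0∞`. -/
noncomputable def meanOsc {X : Type*} [MeasurableSpace X] (μ : Measure X)
    (p : ℝ) (f : X → ℝ) (B : Set X) : ℝ≥0∞ :=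
  (∫⁻ x in B, ENNReal.ofReal (|f x - ballAvg μ B f| ^ p) ∂μ) / μ B

/-- The `BMO^p` seminorm `‖f‖_{*,p}`: the supremum over all (open) balls of the
`p`-th root of the normalized `p`-th mean oscillation. -/
noncomputable def bmoNorm {X : Type*} [MetricSpace X] [MeasurableSpace X]
    (μ : Measure X) (p : ℝ) (f : X → ℝ) : ℝ≥0∞ :=
  ⨆ (c : X) (r : ℝ) (_ : 0 < r), (meanOsc μ p f (ball c r)) ^ (1 / p)

/-- `f ∈ BMO^p(𝕏)`: `f` is integrable on every ball and `‖f‖_{*,p} < ∞`. -/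
def MemBMO {X : Type*} [MetricSpace X] [MeasurableSpace X]
    (μ : Measure X) (p : ℝ) (f : X → ℝ) : Prop :=
  (∀ (c : X) (r : ℝ), 0 < r → IntegrableOn f (ball c r) μ) ∧ bmoNorm μ p f < ⊤

/-- case (c) of Theorem 1: let
`p₀ = sup{p ∈ [1,∞) : BMO^p(𝕏) = BMO^1(𝕏)}` be finite (the defining set being bounded
above) and suppose `BMO^{p₀}(𝕏) = BMO^1(𝕏)`. Granting the Hölder inclusions and the
dilation lemma, one concludes: `BMO^p(𝕏) = BMO^1(𝕏)` for all `1 ≤ p ≤ p₀`, and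
`BMO^{p₁}(𝕏) ⊊ BMO^{p₂}(𝕏)` for all `1 ≤ p₁ < p₂` with `p₂ > p₀`. -/
theorem bmo_trichotomy_closed_case
    {X : Type*} [MetricSpace X] [MeasurableSpace X] (μ : Measure X)
    (hμ : ∀ (c : X) (r : ℝ), 0 < r → 0 < μ (ball c r) ∧ μ (ball c r) < ⊤)
    (hmono : ∀ p q : ℝ, 1 ≤ p → p ≤ q → ∀ f : X → ℝ, MemBMO μ q f → MemBMO μ p f)
    (hdilation : ∀ p₁ p₂ : ℝ, 1 ≤ p₁ → p₁ < p₂ →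
      (∃ f : X → ℝ, MemBMO μ p₁ f ∧ ¬ MemBMO μ p₂ f) →
      ∀ α : ℝ, 1 < α → ∃ g : X → ℝ, MemBMO μ (α * p₁) g ∧ ¬ MemBMO μ (α * p₂) g)
    (p₀ : ℝ)
    (hp₀def : p₀ = sSup {p : ℝ | 1 ≤ p ∧ ∀ f : X → ℝ, MemBMO μ p f ↔ MemBMO μ 1 f})
    (hbdd : BddAbove {p : ℝ | 1 ≤ p ∧ ∀ f : X → ℝ, MemBMO μ p f ↔ MemBMO μ 1 f})
    (hclosed : ∀ f : X → ℝ, MemBMO μ p₀ f ↔ MemBMO μ 1 f) :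
    (∀ p : ℝ, 1 ≤ p → p ≤ p₀ → ∀ f : X → ℝ, MemBMO μ p f ↔ MemBMO μ 1 f) ∧
    (∀ p₁ p₂ : ℝ, 1 ≤ p₁ → p₁ < p₂ → p₀ < p₂ →
      ∃ f : X → ℝ, MemBMO μ p₁ f ∧ ¬ MemBMO μ p₂ f) := by

  -- `1` belongs to the defining set, so `1 ≤ p₀`.
  have h1mem : (1:ℝ) ∈ {p : ℝ | 1 ≤ p ∧ ∀ f : X → ℝ, MemBMO μ p f ↔ MemBMO μ 1 f} :=
    ⟨le_rfl, fun f => Iff.rfl⟩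
  have hp₀1 : (1:ℝ) ≤ p₀ := hp₀def ▸ le_csSup hbdd h1mem
  -- key: for every `q > p₀` there is `f ∈ BMO^{p₀} \\ BMO^q`.
  have hkey : ∀ q : ℝ, p₀ < q → ∃ f : X → ℝ, MemBMO μ p₀ f ∧ ¬ MemBMO μ q f := by
    intro q hq
    have hq1 : (1:ℝ) ≤ q := le_trans hp₀1 hq.le
    have hqnot : q ∉ {p : ℝ | 1 ≤ p ∧ ∀ f : X → ℝ, MemBMO μ p f ↔ MemBMO μ 1 f} := by
      intro hmem
      exact absurd (hp₀def ▸ le_csSup hbdd hmem) (not_le_of_gt hq)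
    have : ¬ ∀ f : X → ℝ, MemBMO μ q f ↔ MemBMO μ 1 f := fun h => hqnot ⟨hq1, h⟩
    push_neg at this
    obtain ⟨f, hf⟩ := this
    have hfwd : MemBMO μ q f → MemBMO μ 1 f := hmono 1 q le_rfl hq1 f
    rcases hf with ⟨hq', h1⟩ | ⟨hq', h1⟩
    · exact absurd (hfwd hq') h1
    · exact ⟨f, (hclosed f).mpr h1, hq'⟩
  have part1 : ∀ p : ℝ, 1 ≤ p → p ≤ p₀ → ∀ f : X → ℝ, MemBMO μ p f ↔ MemBMO μ 1 f := by
    intro p hp1 hpp₀ f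
    constructor
    · exact fun h => hmono 1 p le_rfl hp1 f h
    · exact fun h => hmono p p₀ hp1 hpp₀ f ((hclosed f).mpr h)
  refine ⟨part1, ?_⟩
  intro p₁ p₂ hp₁1 h12 hp₀2
  rcases le_or_gt p₁ p₀ with hle | hlt
  · -- `BMO^{p₁} = BMO^1`; if the strict inclusion failed, `p₂` would be in the set.
    by_contra hcon
    push_neg at hcon
    have hp₂mem : p₂ ∈ {p : ℝ | 1 ≤ p ∧ ∀ f : X → ℝ, MemBMO μ p f ↔ MemBMO μ 1 f} := by
      refine ⟨le_trans hp₁1 h12.le, fun f => ⟨fun h => hmono 1 p₂ le_rfl (le_trans hp₁1 h12.le) f h, fun h => ?_⟩⟩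
      exact hcon f ((part1 p₁ hp₁1 hle f).mpr h)
    exact absurd (hp₀def ▸ le_csSup hbdd hp₂mem) (not_le_of_gt hp₀2)
  · -- `p₀ < p₁`: dilate the strict pair `(p₀, p₀·p₂/p₁)` by `α = p₁/p₀`.
    have hp₀pos : (0:ℝ) < p₀ := lt_of_lt_of_le one_pos hp₀1
    have hp₁pos : (0:ℝ) < p₁ := lt_of_le_of_lt hp₀pos.le hlt
    set q := p₀ * p₂ / p₁ with hqdef
    have hq : p₀ < q := by
      rw [hqdef, lt_div_iff₀ hp₁pos]
      nlinarith
    set α := p₁ / p₀ with hαdef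
    have hα : 1 < α := (one_lt_div hp₀pos).mpr hlt
    obtain ⟨g, hg1, hg2⟩ := hdilation p₀ q hp₀1 hq (hkey q hq) α hα
    have e1 : α * p₀ = p₁ := by rw [hαdef]; field_simp
    have e2 : α * q = p₂ := by rw [hαdef, hqdef]; field_simp
    rw [e1] at hg1; rw [e2] at hg2
    exact ⟨g, hg1, hg2⟩
end
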